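/- arXiv:1407.6513 — 3 statements merged into one kernel-verified Lean document; each statement's English description precedes it below -/
import Mathlib

section
/- Let n ≥ 1, let E = EuclideanSpace ℝ (Fin n), let η > 0 be a real constant, and let x : ℕ → E be a sequence of pattern vectors, α : ℕ → ℝ a sequence of step sizes and θ : ℕ → ℝ a sequence of thresholds with 0 < α t ≤ α 0 < 1/η and θ t ≥ 0 for all t. Define the sequence w : ℕ → E by the learning update w(t+1) = w(t) − α t • ( y(t) • (x(t) − (y(t)/‖w(t)‖²) • w(t)) + η • Γ(w(t), θ t) ), where y(t) = ⟪x(t), w(t)⟫ and Γ(v, θ) is the soft-threshold vector with i-th entry v_i if |v_i| ≤ θ and 0 otherwise. If ‖w 0‖ > 0, then ‖w t‖ > 0 for every t. -/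
/-- Soft-threshold map: `(softThresh v θ) i = v i` if `|v i| ≤ θ`, and `0` otherwise. -/
noncomputable def softThresh {n : ℕ} (v : EuclideanSpace ℝ (Fin n)) (θ : ℝ) :
    EuclideanSpace ℝ (Fin n) :=
  WithLp.toLp 2 (fun i => if |v i| ≤ θ then v i else 0)

lemma softThresh_inner_nonneg {n : ℕ} (v : EuclideanSpace ℝ (Fin n)) (θ : ℝ) :
    (0:ℝ) ≤ inner ℝ v (softThresh v θ) := by
  rw [PiLp.inner_apply]
  apply Finset.sum_nonneg
  intro i _
  simp only [softThresh, PiLp.toLp_apply, RCLike.inner_apply, conj_trivial]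
  split
  · exact mul_self_nonneg _
  · simp

lemma softThresh_inner_le {n : ℕ} (v : EuclideanSpace ℝ (Fin n)) (θ : ℝ) :
    (inner ℝ v (softThresh v θ) : ℝ) ≤ ‖v‖ ^ 2 := by
  rw [← real_inner_self_eq_norm_sq, PiLp.inner_apply, PiLp.inner_apply]
  apply Finset.sum_le_sum
  intro i _
  simp only [softThresh, PiLp.toLp_apply, RCLike.inner_apply, conj_trivial]
  split
  · exact le_rfl
  · nlinarith [mul_self_nonneg (v i)]

/-- Lemma 1: the weight vector never becomes zero along the learning iterations. -/
theorem weight_never_zero (n : ℕ) (hn : 1 ≤ n) (η : ℝ) (hη : 0 < η)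
    (x w : ℕ → EuclideanSpace ℝ (Fin n)) (α θ : ℕ → ℝ)
    (hαpos : ∀ t, 0 < α t) (hα0 : ∀ t, α t ≤ α 0) (hαη : α 0 < 1 / η)
    (hθ : ∀ t, 0 ≤ θ t)
    (hupd : ∀ t, w (t + 1) =
      w t - α t • ((inner ℝ (x t) (w t) : ℝ) •
          (x t - ((inner ℝ (x t) (w t) : ℝ) / ‖w t‖ ^ 2) • w t)
        + η • softThresh (w t) (θ t)))
    (h0 : 0 < ‖w 0‖) :
    ∀ t, 0 < ‖w t‖ := by
  intro t
  induction t with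
  | zero => exact h0
  | succ t ih =>
    set v := w t with hv
    have hv2 : (0:ℝ) < ‖v‖ ^ 2 := by positivity
    set y : ℝ := inner ℝ (x t) v with hy
    set G : ℝ := inner ℝ v (softThresh v (θ t)) with hG
    have hG0 : (0:ℝ) ≤ G := softThresh_inner_nonneg v (θ t)
    have hG1 : G ≤ ‖v‖ ^ 2 := softThresh_inner_le v (θ t)
    have hαη' : α t * η < 1 := by
      have : α t < 1 / η := lt_of_le_of_lt (hα0 t) hαη
      calc α t * η < (1/η) * η := by
            exact mul_lt_mul_of_pos_right this hη
        _ = 1 := by field_simp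
    have hinner : (inner ℝ v (w (t+1)) : ℝ) = ‖v‖ ^ 2 - α t * (η * G) := by
      rw [hupd t, ← hv]
      simp only [inner_sub_right, inner_add_right, real_inner_smul_right]
      rw [real_inner_self_eq_norm_sq]
      have hxy : (inner ℝ v (x t) : ℝ) = y := by rw [real_inner_comm]
      rw [hxy, ← hy, ← hG, div_mul_cancel₀ _ (ne_of_gt hv2)]
      ring
    have hpos : (0:ℝ) < inner ℝ v (w (t+1)) := by
      rw [hinner]
      have h1 : α t * (η * G) ≤ α t * η * ‖v‖ ^ 2 := by
        rw [mul_assoc]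
        apply mul_le_mul_of_nonneg_left _ (le_of_lt (hαpos t))
        exact mul_le_mul_of_nonneg_left hG1 (le_of_lt hη)
      have h2 : α t * η * ‖v‖ ^ 2 < 1 * ‖v‖ ^ 2 :=
        mul_lt_mul_of_pos_right hαη' hv2
      nlinarith
    have : w (t+1) ≠ 0 := by
      intro h
      rw [h, inner_zero_right] at hpos
      exact lt_irrefl 0 hpos
    exact norm_pos_iff.mpr this
end

section
/- Let E = EuclideanSpace ℝ (Fin n), let w, x ∈ E with w ≠ 0, set y = ⟪x, w⟫, and let α ∈ ℝ. Define ẁ = w − α • (y • (x − (y/‖w‖²) • w)). Then ⟪x, ẁ⟫ = y · (1 − α·(‖x‖² − y²/‖w‖²)). Moreover, if 0 ≤ α·(‖x‖² − y²/‖w‖²) ≤ 2, then |⟪x, ẁ⟫| ≤ |⟪x, w⟫|; that is, the update does not increase the magnitude of the projection of the pattern onto the weight vector. -/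
/-- The learning update does not increase the magnitude of the projection of the
pattern onto the weight vector. -/
theorem update_reduces_projection (n : ℕ) (w x : EuclideanSpace ℝ (Fin n)) (hw : w ≠ 0)
    (α : ℝ) (y : ℝ) (hy : y = (inner ℝ x w : ℝ))
    (w' : EuclideanSpace ℝ (Fin n))
    (hw' : w' = w - α • (y • (x - (y / ‖w‖ ^ 2) • w))) :
    (inner ℝ x w' : ℝ) = y * (1 - α * (‖x‖ ^ 2 - y ^ 2 / ‖w‖ ^ 2)) ∧
      (0 ≤ α * (‖x‖ ^ 2 - y ^ 2 / ‖w‖ ^ 2) → α * (‖x‖ ^ 2 - y ^ 2 / ‖w‖ ^ 2) ≤ 2 →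
        |(inner ℝ x w' : ℝ)| ≤ |(inner ℝ x w : ℝ)|) := by
  have h1 : (inner ℝ x w' : ℝ) = y * (1 - α * (‖x‖ ^ 2 - y ^ 2 / ‖w‖ ^ 2)) := by
    simp only [hw', inner_sub_right, inner_smul_right, real_inner_self_eq_norm_sq, ← hy]
    ring
  refine ⟨h1, fun h0 h2 => ?_⟩
  rw [h1, ← hy, abs_mul]
  have : |1 - α * (‖x‖ ^ 2 - y ^ 2 / ‖w‖ ^ 2)| ≤ 1 := abs_le.mpr ⟨by linarith, by linarith⟩
  calc |y| * |1 - α * (‖x‖ ^ 2 - y ^ 2 / ‖w‖ ^ 2)| ≤ |y| * 1 :=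
        mul_le_mul_of_nonneg_left this (abs_nonneg y)
    _ = |y| := mul_one _
end

section
/- Let w ∈ EuclideanSpace ℝ (Fin n) and for σ > 0 define g_σ(w) = Σ_{i} tanh(σ · w_i²). Then g_σ(w) tends to ‖w‖₀ := the number of indices i with w_i ≠ 0, as σ → ∞. -/
open Filter

lemma tanh_rewrite (x : ℝ) :
    Real.tanh x = (1 - Real.exp (-(2*x))) / (1 + Real.exp (-(2*x))) := by
  have h1 : Real.exp (-x) = Real.exp x * Real.exp (-(2*x)) := by
    rw [← Real.exp_add]; ring_nf
  rw [Real.tanh_eq_sinh_div_cosh, Real.sinh_eq, Real.cosh_eq, h1]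
  have h2 : (0:ℝ) < Real.exp x := Real.exp_pos x
  have h3 : (0:ℝ) < 1 + Real.exp (-(2*x)) := by positivity
  field_simp

lemma tanh_tendsto_one : Tendsto Real.tanh atTop (nhds 1) := by
  have h2 : Tendsto (fun x : ℝ => 2 * x) atTop atTop :=
    tendsto_id.const_mul_atTop two_pos
  have he : Tendsto (fun x : ℝ => Real.exp (-(2*x))) atTop (nhds 0) :=
    Real.tendsto_exp_atBot.comp (tendsto_neg_atBot_iff.mpr h2)
  have h : Tendsto (fun x : ℝ => (1 - Real.exp (-(2*x))) / (1 + Real.exp (-(2*x)))) atTop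
      (nhds ((1 - 0) / (1 + 0))) :=
    (tendsto_const_nhds.sub he).div (tendsto_const_nhds.add he) (by norm_num)
  have h' := h.congr (fun x => (tanh_rewrite x).symm)
  simpa using h'

/-- The penalty `g_σ(w) = Σᵢ tanh (σ wᵢ²)` tends to the ℓ₀ pseudo-norm `‖w‖₀`
as `σ → ∞`. -/
theorem penalty_tendsto_l0 (n : ℕ) (w : EuclideanSpace ℝ (Fin n)) :
    Tendsto (fun σ : ℝ => ∑ i, Real.tanh (σ * (w i) ^ 2)) atTop
      (nhds ((Finset.univ.filter fun i => w i ≠ 0).card : ℝ)) := by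
  have hcard : ((Finset.univ.filter fun i => w i ≠ 0).card : ℝ)
      = ∑ i : Fin n, (if w i ≠ 0 then (1:ℝ) else 0) := by
    rw [Finset.sum_boole]
  rw [hcard]
  apply tendsto_finset_sum
  intro i _
  by_cases h : w i = 0
  · simp [h]
  · simp only [h, if_pos, ne_eq, not_false_eq_true]
    apply tanh_tendsto_one.comp
    have hw : 0 < (w i) ^ 2 := by positivity
    exact Tendsto.atTop_mul_const hw tendsto_id
end
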